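/- Let α₁, α₂ ∈ (0,1), μ₁, μ₂ > 0 and λ₁, λ₂ > 0 with 2λ₁ < μ₁ and 2λ₂ < μ₂, and let θ ∈ ℝ. Then the iterated series converge and Σ_{n=1}^{∞} μ₁^{α₁−n} binom(α₁,n) λ₁^{n} Σ_{l=1}^{n} C(n,l)(−1)^{l+1}(e^{iθl} − 1) + Σ_{n=1}^{∞} μ₂^{α₂−n} binom(α₂,n) λ₂^{n} Σ_{l=1}^{n} C(n,l)(−1)^{l+1}(e^{−iθl} − 1) = −( (μ₁ + λ₁(1−e^{iθ}))^{α₁} − μ₁^{α₁} ) − ( (μ₂ + λ₂(1−e^{−iθ}))^{α₂} − μ₂^{α₂} ), where complex powers are principal branches and C(n,l) is the ordinary binomial coefficient. -/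

import Mathlib

/-- Generalized binomial coefficient `binom(α, n) = (∏_{j=0}^{n-1} (α - j)) / n!`. -/
noncomputable def genBinom (α : ℝ) (n : ℕ) : ℝ :=
  (∏ j ∈ Finset.range n, (α - j)) / (Nat.factorial n : ℝ)

lemma genBinom_zero (α : ℝ) : genBinom α 0 = 1 := by simp [genBinom]

lemma genBinom_succ (α : ℝ) (n : ℕ) :
    (n + 1 : ℝ) * genBinom α (n + 1) = (α - n) * genBinom α n := by
  have h : (Nat.factorial (n+1) : ℝ) = (n+1) * Nat.factorial n := by
    push_cast [Nat.factorial_succ]; ring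
  have hfac : (Nat.factorial n : ℝ) ≠ 0 := Nat.cast_ne_zero.2 (Nat.factorial_ne_zero n)
  have hfac1 : (Nat.factorial (n+1) : ℝ) ≠ 0 := Nat.cast_ne_zero.2 (Nat.factorial_ne_zero _)
  unfold genBinom
  rw [Finset.prod_range_succ, h]
  field_simp [genBinom, Finset.prod_range_succ, h]

lemma abs_genBinom_le_one {α : ℝ} (hα : α ∈ Set.Ioo (0:ℝ) 1) (n : ℕ) :
    |genBinom α n| ≤ 1 := by
  induction n with
  | zero => simp [genBinom_zero]
  | succ n ih =>
    have hrec := genBinom_succ α n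
    have hn1 : (0:ℝ) < n + 1 := by positivity
    have h : genBinom α (n+1) = (α - n) / (n+1) * genBinom α n := by
      field_simp at hrec ⊢; linarith [hrec]
    rw [h, abs_mul, abs_div]
    obtain ⟨ha, ha'⟩ := hα
    have hn0 : (0:ℝ) ≤ n := Nat.cast_nonneg n
    have h1 : |α - (n:ℝ)| ≤ n + 1 := by
      rw [abs_le]; constructor <;> linarith
    calc |α - ↑n| / |↑n + 1| * |genBinom α n| ≤ 1 * 1 := by
          apply mul_le_mul _ ih (abs_nonneg _) zero_le_one
          rw [abs_of_pos hn1, div_le_one hn1]; linarith [h1]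
      _ = 1 := by ring

open Complex in
lemma summable_genBinom_mul_pow {α : ℝ} (hα : α ∈ Set.Ioo (0:ℝ) 1) {w : ℂ} (hw : ‖w‖ < 1) :
    Summable (fun n => ((genBinom α n : ℝ) : ℂ) * w ^ n) := by
  refine Summable.of_norm_bounded (summable_geometric_of_lt_one (norm_nonneg w) hw) ?_
  intro n
  rw [norm_mul, norm_pow]
  have h : ‖((genBinom α n : ℝ):ℂ)‖ ≤ 1 := by
    simpa [Complex.norm_real, Real.norm_eq_abs] using abs_genBinom_le_one hα n
  exact mul_le_of_le_one_left (pow_nonneg (norm_nonneg w) n) h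

set_option maxHeartbeats 1000000 in
open Complex in
lemma hasSum_binomial {α : ℝ} (hα : α ∈ Set.Ioo (0:ℝ) 1) {z : ℂ} (hz : ‖z‖ < 1) :
    HasSum (fun n => ((genBinom α n : ℝ) : ℂ) * z ^ n) ((1 + z) ^ (α : ℂ)) := by
  set c : ℕ → ℂ := fun n => ((genBinom α n : ℝ) : ℂ) with hcdef
  set r : ℝ := (‖z‖ + 1) / 2 with hrdef
  have hr0 : 0 < r := by positivity
  have hr1 : r < 1 := by rw [hrdef]; linarith
  have hzr : ‖z‖ < r := by rw [hrdef]; linarith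
  set t : Set ℂ := Metric.ball (0:ℂ) r with htdef
  have ht : IsOpen t := Metric.isOpen_ball
  have htc : Convex ℝ t := convex_ball 0 r
  have hmem : ∀ w ∈ t, ‖w‖ < r := by
    intro w hw; rwa [htdef, mem_ball_zero_iff] at hw
  have h0t : (0:ℂ) ∈ t := by rw [htdef, mem_ball_zero_iff]; simpa using hr0
  have hzt : z ∈ t := by rw [htdef, mem_ball_zero_iff]; exact hzr
  set g : ℕ → ℂ → ℂ := fun n w => c n * w ^ n with hgdef
  set g' : ℕ → ℂ → ℂ := fun n w => c n * ((n:ℂ) * w ^ (n - 1)) with hg'def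
  set u : ℕ → ℝ := fun n => (n : ℝ) * r ^ (n - 1) with hudef
  have hu : Summable u := by
    have h := summable_pow_mul_geometric_of_norm_lt_one 1
      (r := r) (by rwa [Real.norm_eq_abs, abs_of_pos hr0])
    refine Summable.of_nonneg_of_le (fun n => by positivity) (fun n => ?_) (h.mul_left (1/r))
    match n with
    | 0 => simp [hudef]
    | (m+1) =>
      simp only [hudef, Nat.add_sub_cancel]
      apply le_of_eq
      rw [pow_one, pow_succ]
      push_cast
      field_simp
  have hcle : ∀ n, ‖c n‖ ≤ 1 := fun n => by
    simpa [hcdef, Complex.norm_real, Real.norm_eq_abs] using abs_genBinom_le_one hα n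
  have hg : ∀ n w, w ∈ t → HasDerivAt (g n) (g' n w) w := fun n w _ =>
    (hasDerivAt_pow n w).const_mul (c n)
  have hg' : ∀ n w, w ∈ t → ‖g' n w‖ ≤ u n := by
    intro n w hw
    have hwr := hmem w hw
    calc ‖c n * ((n:ℂ) * w ^ (n-1))‖ = ‖c n‖ * ((n:ℝ) * ‖w‖^(n-1)) := by
          simp [norm_mul, norm_pow]
      _ ≤ 1 * ((n:ℝ) * r^(n-1)) := by
          apply mul_le_mul (hcle n) _ (by positivity) zero_le_one
          exact mul_le_mul_of_nonneg_left
            (pow_le_pow_left₀ (norm_nonneg w) hwr.le _) (Nat.cast_nonneg n)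
      _ = u n := by rw [hudef]; ring
  have hg0 : Summable fun n => g n 0 :=
    summable_genBinom_mul_pow hα (by simp : ‖(0:ℂ)‖ < 1)
  set F : ℂ → ℂ := fun w => ∑' n, g n w with hFdef
  set D : ℂ → ℂ := fun w => ∑' n, g' n w with hDdef
  have hF : ∀ w ∈ t, HasDerivAt F (D w) w := fun w hw =>
    hasDerivAt_tsum_of_isPreconnected hu ht htc.isPreconnected hg hg' h0t hg0 hw
  have hFsum : ∀ w, ‖w‖ < 1 → HasSum (fun n => g n w) (F w) := fun w hw =>
    (summable_genBinom_mul_pow hα hw).hasSum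
  -- the ODE
  have hode : ∀ w ∈ t, (1 + w) * D w = (α:ℂ) * F w := by
    intro w hw
    have hw1 : ‖w‖ < 1 := (hmem w hw).trans hr1
    have hD : HasSum (fun n => g' n w) (D w) :=
      (Summable.of_norm_bounded hu (fun n => hg' n w hw)).hasSum
    have hshift : HasSum (fun n => g' (n+1) w) (D w) := by
      have h0 : g' 0 w = 0 := by simp [hg'def]
      refine (hasSum_nat_add_iff (f := fun n => g' n w) 1).mpr ?_
      simpa [h0] using hD
    have hwD : HasSum (fun n => c n * ((n:ℂ) * w^n)) (w * D w) := by
      have h := hD.mul_left w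
      have he : (fun n => c n * ((n:ℂ)*w^n)) = fun n => w * g' n w := by
        funext n
        match n with
        | 0 => simp [hg'def]
        | (m+1) => simp only [hg'def, Nat.add_sub_cancel, pow_succ]; ring
      rw [he]; exact h
    have hkey := hshift.add hwD
    have hterm : (fun n => g' (n+1) w + c n * ((n:ℂ) * w^n)) =
        fun n => (α:ℂ) * g n w := by
      funext n
      have hrec : ((n:ℂ) + 1) * c (n+1) = ((α:ℂ) - n) * c n := by
        simp only [hcdef]
        exact_mod_cast congrArg (fun x : ℝ => (x : ℂ)) (genBinom_succ α n)
      simp only [hg'def, hgdef, Nat.add_sub_cancel]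
      push_cast
      linear_combination w^n * hrec
    rw [hterm] at hkey
    have hαF : HasSum (fun n => (α:ℂ) * g n w) ((α:ℂ) * F w) := (hFsum w hw1).mul_left _
    have := hkey.unique hαF
    linear_combination this
  -- slit plane facts
  have hslit : ∀ w ∈ t, (1 + w) ∈ Complex.slitPlane := by
    intro w hw
    have hw1 : ‖w‖ < 1 := (hmem w hw).trans hr1
    apply Complex.mem_slitPlane_iff.2
    left
    have : |w.re| ≤ ‖w‖ := Complex.abs_re_le_norm w
    simp only [Complex.add_re, Complex.one_re]
    have := neg_abs_le w.re
    linarith [abs_le.1 (Complex.abs_re_le_norm w)]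
  have hne : ∀ w ∈ t, (1:ℂ) + w ≠ 0 := fun w hw =>
    Complex.slitPlane_ne_zero (hslit w hw)
  -- G is constant
  set G : ℂ → ℂ := fun w => F w * (1 + w) ^ (-(α:ℂ)) with hGdef
  have hG' : ∀ w ∈ t, HasDerivAt G 0 w := by
    intro w hw
    have h1 : HasDerivAt (fun w : ℂ => (1 + w) ^ (-(α:ℂ)))
        (-(α:ℂ) * (1+w)^(-(α:ℂ)-1) * 1) w :=
      HasDerivAt.cpow_const ((hasDerivAt_id w).const_add 1) (hslit w hw)
    have h2 := (hF w hw).mul h1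
    have hcp : (1+w)^(-(α:ℂ)) = (1+w)^(-(α:ℂ)-1) * (1+w) := by
      have h3 := Complex.cpow_add (x := 1+w) (-(α:ℂ)-1) 1 (hne w hw)
      have h4 : (-(α:ℂ)-1) + 1 = -(α:ℂ) := by ring
      rw [h4, Complex.cpow_one] at h3
      exact h3
    have h2' : HasDerivAt G (D w * (1 + w) ^ (-(α:ℂ)) + F w * (-(α:ℂ) * (1 + w) ^ (-(α:ℂ) - 1) * 1)) w := h2
    refine h2'.congr_deriv ?_
    rw [hcp]
    have := hode w hw
    linear_combination ((1+w)^(-(α:ℂ)-1)) * this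
  have hGconst : G z = G 0 := by
    have h := htc.norm_image_sub_le_of_norm_hasDerivWithin_le
      (f' := fun _ => (0:ℂ)) (C := 0)
      (fun x hx => (hG' x hx).hasDerivWithinAt) (fun x _ => by simp) h0t hzt
    rw [zero_mul] at h
    rw [← sub_eq_zero]
    exact norm_le_zero_iff.1 h
  have hF0 : F 0 = 1 := by
    have h5 : F 0 = ∑' n, g n 0 := rfl
    rw [h5, tsum_eq_single 0 (fun n hn => by simp [hgdef, zero_pow hn])]
    simp [hgdef, hcdef, genBinom_zero]
  have hG0 : G 0 = 1 := by
    simp [hGdef, hF0]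
  have hGz : F z * (1 + z) ^ (-(α:ℂ)) = 1 := hGconst.trans hG0
  have hFz : F z = (1 + z) ^ (α:ℂ) := by
    rw [Complex.cpow_neg] at hGz
    have hne' : (1+z)^(α:ℂ) ≠ 0 := by
      intro h
      rcases (Complex.cpow_eq_zero_iff _ _).1 h with ⟨h1, -⟩
      exact hne z hzt h1
    field_simp at hGz
    exact hGz
  have := hFsum z hz
  rwa [hFz] at this
open Complex in
lemma ofReal_mul_cpow' {μ : ℝ} (hμ : 0 < μ) {w : ℂ} (hw : w ≠ 0) (s : ℂ) :
    ((μ:ℂ) * w) ^ s = (μ:ℂ) ^ s * w ^ s := by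
  have hμ' : (μ:ℂ) ≠ 0 := by exact_mod_cast hμ.ne'
  rw [Complex.cpow_def_of_ne_zero (mul_ne_zero hμ' hw),
      Complex.cpow_def_of_ne_zero hμ', Complex.cpow_def_of_ne_zero hw,
      Complex.log_ofReal_mul hμ hw, ← Complex.ofReal_log hμ.le,
      add_mul, Complex.exp_add]

open Complex in
lemma hasSum_shifted {α μ : ℝ} (hα : α ∈ Set.Ioo (0:ℝ) 1) (hμ : 0 < μ) {z : ℂ}
    (hz : ‖z‖ < μ) :
    HasSum (fun n : ℕ => ((μ ^ (α - (n:ℝ)) * genBinom α n : ℝ) : ℂ) * z ^ n)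
      (((μ:ℂ) + z) ^ (α:ℂ)) := by
  have hμ0 : (μ:ℂ) ≠ 0 := by exact_mod_cast hμ.ne'
  have hw : ‖z / (μ:ℂ)‖ < 1 := by
    rw [norm_div, Complex.norm_real, Real.norm_eq_abs, abs_of_pos hμ, div_lt_one hμ]
    exact hz
  have h := (hasSum_binomial hα hw).mul_left (((μ ^ α : ℝ)) : ℂ)
  have hterm : (fun n : ℕ => ((μ ^ α:ℝ):ℂ) * (((genBinom α n:ℝ):ℂ) * (z/(μ:ℂ))^n))
      = fun n : ℕ => ((μ ^ (α - (n:ℝ)) * genBinom α n : ℝ) : ℂ) * z ^ n := by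
    funext n
    have h1 : μ ^ (α - (n:ℝ)) = μ ^ α / μ ^ n := by
      rw [Real.rpow_sub hμ, Real.rpow_natCast]
    have hμn : ((μ:ℂ))^n ≠ 0 := pow_ne_zero n hμ0
    rw [h1]
    push_cast
    rw [div_pow]
    field_simp
  have hne : (1:ℂ) + z/(μ:ℂ) ≠ 0 := by
    intro hcon
    have h2 : z/(μ:ℂ) = -1 := by linear_combination hcon
    rw [h2] at hw
    simp at hw
  have hrhs : ((μ ^ α:ℝ):ℂ) * ((1:ℂ) + z/(μ:ℂ))^((α:ℝ):ℂ) = ((μ:ℂ) + z) ^ (α:ℂ) := by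
    have h3 : (μ:ℂ) + z = (μ:ℂ) * (1 + z/(μ:ℂ)) := by field_simp
    rw [h3, ofReal_mul_cpow' hμ hne, ← Complex.ofReal_cpow hμ.le]
  rw [hterm, hrhs] at h
  exact h

lemma inner_sum_eq (m : ℕ) (hm : 1 ≤ m) (x : ℂ) :
    ∑ l ∈ Finset.Icc 1 m, (m.choose l : ℂ) * (-1:ℂ)^(l+1) * (x ^ l - 1)
      = -((1 - x)^m) := by
  have hIcc : Finset.Icc 1 m = Finset.range (m+1) \ {0} := by
    ext l
    simp only [Finset.mem_Icc, Finset.mem_sdiff, Finset.mem_range, Finset.mem_singleton]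
    omega
  have hsub : ({0} : Finset ℕ) ⊆ Finset.range (m+1) := by simp
  rw [hIcc, Finset.sum_sdiff_eq_sub hsub, Finset.sum_singleton]
  rw [show ((m.choose 0 : ℂ) * (-1:ℂ)^(0+1) * (x^0 - 1)) = 0 by simp, sub_zero]
  have hexp : ∀ l ∈ Finset.range (m+1), (m.choose l : ℂ) * (-1:ℂ)^(l+1) * (x^l - 1)
      = -((-x)^l * (1:ℂ)^(m-l) * (m.choose l : ℂ))
        + ((-1:ℂ)^l * (1:ℂ)^(m-l) * (m.choose l : ℂ)) := by
    intro l _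
    rw [neg_pow, one_pow, pow_succ]
    ring
  rw [Finset.sum_congr rfl hexp, Finset.sum_add_distrib, Finset.sum_neg_distrib]
  rw [← add_pow, ← add_pow]
  have h0 : ((-1:ℂ) + 1)^m = 0 := by
    rw [show ((-1:ℂ) + 1) = 0 by ring, zero_pow (by omega : m ≠ 0)]
  rw [h0, add_zero, show ((-x) + 1 : ℂ) = 1 - x by ring]
open Complex in
lemma branch_hasSum {α μ lam : ℝ} (hα : α ∈ Set.Ioo (0:ℝ) 1) (hμ : 0 < μ) (hlam : 0 < lam)
    (h : 2 * lam < μ) (x : ℂ) (hx : ‖x‖ = 1) :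
    HasSum (fun n : ℕ =>
        ((μ ^ (α - ((n:ℝ) + 1)) * genBinom α (n + 1) * lam ^ (n + 1) : ℝ) : ℂ) *
          ∑ l ∈ Finset.Icc 1 (n + 1),
            ((n + 1).choose l : ℂ) * (-1:ℂ)^(l+1) * (x ^ l - 1))
      (-((((μ:ℂ) + (lam:ℂ) * (1 - x)) ^ ((α:ℝ):ℂ)) - (μ:ℂ) ^ ((α:ℝ):ℂ))) := by
  set z : ℂ := (lam:ℂ) * (1 - x) with hzdef
  have hz : ‖z‖ < μ := by
    rw [hzdef, norm_mul, Complex.norm_real, Real.norm_eq_abs, abs_of_pos hlam]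
    calc lam * ‖1 - x‖ ≤ lam * 2 := by
          apply mul_le_mul_of_nonneg_left _ hlam.le
          calc ‖(1:ℂ) - x‖ ≤ ‖(1:ℂ)‖ + ‖x‖ := norm_sub_le _ _
            _ = 2 := by rw [hx, norm_one]; norm_num
      _ < μ := by linarith
  have hsum := hasSum_shifted hα hμ hz
  have ha0 : ((μ ^ (α - ((0:ℕ):ℝ)) * genBinom α 0 : ℝ) : ℂ) * z ^ 0 = (μ:ℂ) ^ ((α:ℝ):ℂ) := by
    simp [genBinom_zero, Complex.ofReal_cpow hμ.le]
  have hshift : HasSum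
      (fun n : ℕ => ((μ ^ (α - ((n+1:ℕ):ℝ)) * genBinom α (n+1) : ℝ) : ℂ) * z ^ (n+1))
      ((((μ:ℂ) + z) ^ ((α:ℝ):ℂ)) - (μ:ℂ) ^ ((α:ℝ):ℂ)) := by
    refine (hasSum_nat_add_iff
      (f := fun n => ((μ ^ (α - (n:ℝ)) * genBinom α n : ℝ) : ℂ) * z ^ n) 1).mpr ?_
    have hs1 : ((((μ:ℂ) + z) ^ ((α:ℝ):ℂ)) - (μ:ℂ) ^ ((α:ℝ):ℂ)) +
        ∑ i ∈ Finset.range 1, ((μ ^ (α - (i:ℝ)) * genBinom α i : ℝ) : ℂ) * z ^ i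
        = ((μ:ℂ) + z) ^ ((α:ℝ):ℂ) := by
      rw [Finset.sum_range_one]
      rw [show (((0:ℕ):ℝ)) = (0:ℝ) by norm_num] at ha0 ⊢
      rw [ha0]; ring
    rw [hs1]
    exact hsum
  have heq : (fun n : ℕ =>
        ((μ ^ (α - ((n:ℝ) + 1)) * genBinom α (n + 1) * lam ^ (n + 1) : ℝ) : ℂ) *
          ∑ l ∈ Finset.Icc 1 (n + 1),
            ((n + 1).choose l : ℂ) * (-1:ℂ)^(l+1) * (x ^ l - 1))
      = fun n : ℕ =>
        -(((μ ^ (α - ((n+1:ℕ):ℝ)) * genBinom α (n+1) : ℝ) : ℂ) * z ^ (n+1)) := by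
    funext n
    rw [inner_sum_eq (n+1) (by omega) x, hzdef, mul_pow]
    push_cast
    ring
  rw [heq]
  simpa [hzdef] using hshift.neg
/-- the Lévy-exponent identity for the tempered space-fractional Skellam
process:
`Σ_{n≥1} μ₁^{α₁-n} binom(α₁,n) λ₁^n Σ_{l=1}^n C(n,l)(-1)^{l+1}(e^{iθl}-1)
 + Σ_{n≥1} μ₂^{α₂-n} binom(α₂,n) λ₂^n Σ_{l=1}^n C(n,l)(-1)^{l+1}(e^{-iθl}-1)
 = -((μ₁+λ₁(1-e^{iθ}))^{α₁} - μ₁^{α₁}) - ((μ₂+λ₂(1-e^{-iθ}))^{α₂} - μ₂^{α₂})`. -/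
theorem tsfsp_levy_exponent (α₁ α₂ μ₁ μ₂ lam1 lam2 θ : ℝ)
    (hα₁ : α₁ ∈ Set.Ioo (0 : ℝ) 1) (hα₂ : α₂ ∈ Set.Ioo (0 : ℝ) 1)
    (hμ₁ : 0 < μ₁) (hμ₂ : 0 < μ₂) (hlam1 : 0 < lam1) (hlam2 : 0 < lam2)
    (h1 : 2 * lam1 < μ₁) (h2 : 2 * lam2 < μ₂) :
    ∃ S₁ S₂ : ℂ,
      HasSum (fun n : ℕ =>
          ((μ₁ ^ (α₁ - ((n : ℝ) + 1)) * genBinom α₁ (n + 1) * lam1 ^ (n + 1) : ℝ) : ℂ) *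
            ∑ l ∈ Finset.Icc 1 (n + 1),
              ((n + 1).choose l : ℂ) * (-1 : ℂ) ^ (l + 1) *
                (Complex.exp (Complex.I * θ * (l : ℂ)) - 1)) S₁ ∧
      HasSum (fun n : ℕ =>
          ((μ₂ ^ (α₂ - ((n : ℝ) + 1)) * genBinom α₂ (n + 1) * lam2 ^ (n + 1) : ℝ) : ℂ) *
            ∑ l ∈ Finset.Icc 1 (n + 1),
              ((n + 1).choose l : ℂ) * (-1 : ℂ) ^ (l + 1) *
                (Complex.exp (-(Complex.I * θ * (l : ℂ))) - 1)) S₂ ∧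
      S₁ + S₂ =
        -((((μ₁ : ℂ) + (lam1 : ℂ) * (1 - Complex.exp (Complex.I * θ))) ^ (α₁ : ℂ)) -
            (μ₁ : ℂ) ^ (α₁ : ℂ))
          - ((((μ₂ : ℂ) + (lam2 : ℂ) * (1 - Complex.exp (-(Complex.I * θ)))) ^ (α₂ : ℂ)) -
            (μ₂ : ℂ) ^ (α₂ : ℂ)) := by
  set x₁ : ℂ := Complex.exp (Complex.I * θ) with hx₁def
  set x₂ : ℂ := Complex.exp (-(Complex.I * θ)) with hx₂def
  have hx₁ : ‖x₁‖ = 1 := by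
    rw [hx₁def, Complex.norm_exp]
    simp [Complex.mul_re]
  have hx₂ : ‖x₂‖ = 1 := by
    rw [hx₂def, Complex.norm_exp]
    simp [Complex.mul_re]
  have hb₁ := branch_hasSum hα₁ hμ₁ hlam1 h1 x₁ hx₁
  have hb₂ := branch_hasSum hα₂ hμ₂ hlam2 h2 x₂ hx₂
  have he₁ : ∀ (n : ℕ),
      (∑ l ∈ Finset.Icc 1 (n + 1), ((n + 1).choose l : ℂ) * (-1 : ℂ) ^ (l + 1) *
          (Complex.exp (Complex.I * θ * (l : ℂ)) - 1))
      = ∑ l ∈ Finset.Icc 1 (n + 1), ((n + 1).choose l : ℂ) * (-1 : ℂ) ^ (l + 1) *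
          (x₁ ^ l - 1) := by
    intro n
    refine Finset.sum_congr rfl fun l _ => ?_
    rw [hx₁def, show Complex.I * θ * (l : ℂ) = (l:ℂ) * (Complex.I * θ) by ring,
      Complex.exp_nat_mul]
  have he₂ : ∀ (n : ℕ),
      (∑ l ∈ Finset.Icc 1 (n + 1), ((n + 1).choose l : ℂ) * (-1 : ℂ) ^ (l + 1) *
          (Complex.exp (-(Complex.I * θ * (l : ℂ))) - 1))
      = ∑ l ∈ Finset.Icc 1 (n + 1), ((n + 1).choose l : ℂ) * (-1 : ℂ) ^ (l + 1) *
          (x₂ ^ l - 1) := by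
    intro n
    refine Finset.sum_congr rfl fun l _ => ?_
    rw [hx₂def, show -(Complex.I * θ * (l : ℂ)) = (l:ℂ) * (-(Complex.I * θ)) by ring,
      Complex.exp_nat_mul]
  refine ⟨-((((μ₁:ℂ) + (lam1:ℂ) * (1 - x₁)) ^ ((α₁:ℝ):ℂ)) - (μ₁:ℂ) ^ ((α₁:ℝ):ℂ)),
    -((((μ₂:ℂ) + (lam2:ℂ) * (1 - x₂)) ^ ((α₂:ℝ):ℂ)) - (μ₂:ℂ) ^ ((α₂:ℝ):ℂ)), ?_, ?_, by ring⟩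
  · simpa only [← he₁] using hb₁
  · simpa only [← he₂] using hb₂
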